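/- Let x ∈ C^α([a,b],ℝ^m), let g ∈ C^2 with ‖Dg‖_∞ ≤ C_g and ‖D²g‖_∞ ≤ C_g, and let (y, y′) be controlled by x with y′ = g(y), i.e. y_{s,t} = g(y_s) x_{s,t} + R^y_{s,t}. Then g(y) is controlled by x with Gubinelli derivative [g(y)]′_s = Dg(y_s) g(y_s) and remainder R^{g(y)}_{s,t} = g(y_t) - g(y_s) - Dg(y_s) g(y_s) x_{s,t} satisfying ‖R^{g(y)}_{s,t}‖ ≤ C_g ‖R^y_{s,t}‖ + (1/2) C_g² ‖y_{s,t}‖ ‖x_{s,t}‖. -/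

import Mathlib

open Set

section Aux

variable {F E : Type*} [NormedAddCommGroup F] [NormedSpace ℝ F]
  [NormedAddCommGroup E] [NormedSpace ℝ E]

/-- Lipschitz bound for the derivative, applied to a vector. -/
lemma fderiv_sub_apply_norm_le {g : F → E} {Cg : ℝ} (hg : ContDiff ℝ 2 g)
    (hD2g : ∀ z, ‖iteratedFDeriv ℝ 2 g z‖ ≤ Cg) (z₁ z₂ : F) (w : F) :
    ‖fderiv ℝ g z₁ w - fderiv ℝ g z₂ w‖ ≤ Cg * ‖z₁ - z₂‖ * ‖w‖ := by
  set φ : F → ContinuousMultilinearMap ℝ (fun _ : Fin 1 => F) E :=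
    iteratedFDeriv ℝ 1 g with hφ
  have hφdiff : Differentiable ℝ φ :=
    hg.differentiable_iteratedFDeriv (by norm_num)
  have hφlip : ‖φ z₁ - φ z₂‖ ≤ Cg * ‖z₁ - z₂‖ := by
    exact convex_univ.norm_image_sub_le_of_norm_fderiv_le
      (fun x _ => hφdiff x)
      (fun x _ => by rw [hφ, norm_fderiv_iteratedFDeriv]; exact hD2g x)
      (mem_univ z₂) (mem_univ z₁)
  have happ : fderiv ℝ g z₁ w - fderiv ℝ g z₂ w = (φ z₁ - φ z₂) (fun _ => w) := by
    simp [hφ, ContinuousMultilinearMap.sub_apply, iteratedFDeriv_one_apply]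
  rw [happ]
  calc ‖(φ z₁ - φ z₂) (fun _ => w)‖ ≤ ‖φ z₁ - φ z₂‖ * ∏ _i : Fin 1, ‖w‖ :=
        (φ z₁ - φ z₂).le_opNorm _
    _ = ‖φ z₁ - φ z₂‖ * ‖w‖ := by simp
    _ ≤ Cg * ‖z₁ - z₂‖ * ‖w‖ :=
        mul_le_mul_of_nonneg_right hφlip (norm_nonneg w)

end Aux

/-- If `(y, y′)` is controlled by `x` with `y′ = g(y)`, i.e.
`y_{s,t} = g(y_s) x_{s,t} + R^y_{s,t}`, and `g ∈ C²` with `‖g‖_∞, ‖Dg‖_∞, ‖D²g‖_∞ ≤ C_g`,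
then `g(y)` is controlled by `x` with Gubinelli derivative `[g(y)]′_s = Dg(y_s) g(y_s)` and
remainder satisfying `‖R^{g(y)}_{s,t}‖ ≤ C_g ‖R^y_{s,t}‖ + (1/2) C_g² ‖y_{s,t}‖ ‖x_{s,t}‖`. -/
theorem controlled_composition {m d : ℕ}
    (g : EuclideanSpace ℝ (Fin d) →
      (EuclideanSpace ℝ (Fin m) →L[ℝ] EuclideanSpace ℝ (Fin d)))
    (Cg : ℝ) (hg : ContDiff ℝ 2 g)
    (hgb : ∀ z, ‖g z‖ ≤ Cg)
    (hDg : ∀ z, ‖fderiv ℝ g z‖ ≤ Cg)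
    (hD2g : ∀ z, ‖iteratedFDeriv ℝ 2 g z‖ ≤ Cg)
    (x : ℝ → EuclideanSpace ℝ (Fin m)) (y : ℝ → EuclideanSpace ℝ (Fin d))
    (R : ℝ → ℝ → EuclideanSpace ℝ (Fin d))
    (hctrl : ∀ s t, y t - y s = g (y s) (x t - x s) + R s t) :
    ∀ s t : ℝ,
      ‖g (y t) - g (y s) - ((fderiv ℝ g (y s)).comp (g (y s))) (x t - x s)‖ ≤
        Cg * ‖R s t‖ + (1 / 2) * Cg ^ 2 * ‖y t - y s‖ * ‖x t - x s‖ := by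
  intro s t
  have hCg : 0 ≤ Cg := le_trans (norm_nonneg _) (hgb (y s))
  set a := y s with ha
  set Δ := y t - y s with hΔdef
  set v := x t - x s with hv
  set r := R s t with hr
  set u := g a v with hu
  have hΔ : Δ = u + r := hctrl s t
  have hgdiff : Differentiable ℝ g := hg.differentiable (by norm_num)
  -- derivative of the path η ↦ g (a + η • Δ)
  have hpath : ∀ η : ℝ, HasDerivAt (fun τ : ℝ => g (a + τ • Δ))
      (fderiv ℝ g (a + η • Δ) Δ) η := by
    intro η
    have h1 : HasDerivAt (fun τ : ℝ => a + τ • Δ) Δ η := by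
      simpa using ((hasDerivAt_id η).smul_const Δ).const_add a
    exact ((hgdiff (a + η • Δ)).hasFDerivAt).comp_hasDerivAt η h1
  -- continuity of the integrand
  have hcont : Continuous (fun η : ℝ => fderiv ℝ g (a + η • Δ) Δ) := by
    have : Continuous (fun η : ℝ => fderiv ℝ g (a + η • Δ)) :=
      (hg.continuous_fderiv (by norm_num)).comp (by fun_prop)
    exact this.clm_apply continuous_const
  have hint : IntervalIntegrable (fun η : ℝ => fderiv ℝ g (a + η • Δ) Δ)
      MeasureTheory.volume 0 1 := hcont.intervalIntegrable _ _
  have hftc : ∫ η in (0:ℝ)..1, fderiv ℝ g (a + η • Δ) Δ = g (y t) - g (y s) := by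
    have := intervalIntegral.integral_eq_sub_of_hasDerivAt
      (f := fun τ : ℝ => g (a + τ • Δ)) (f' := fun η => fderiv ℝ g (a + η • Δ) Δ)
      (fun η _ => hpath η) hint
    have h1 : (fun τ : ℝ => g (a + τ • Δ)) 1 = g (y t) := by
      simp only [one_smul]; congr 1; rw [hΔdef, ha]; abel
    have h0 : (fun τ : ℝ => g (a + τ • Δ)) 0 = g (y s) := by
      simp only [zero_smul, add_zero, ha]
    rw [← h1, ← h0]; exact this
  -- rewrite the goal as a single interval integral
  have hcomp : ((fderiv ℝ g (y s)).comp (g (y s))) v = fderiv ℝ g a u := rfl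
  have hconst : ∫ η in (0:ℝ)..1, fderiv ℝ g a u = fderiv ℝ g a u := by simp
  have hgoal_eq : g (y t) - g (y s) - ((fderiv ℝ g (y s)).comp (g (y s))) v =
      ∫ η in (0:ℝ)..1, (fderiv ℝ g (a + η • Δ) Δ - fderiv ℝ g a u) := by
    rw [intervalIntegral.integral_sub hint (by simp), hftc, hconst, hcomp]
  rw [hgoal_eq]
  -- pointwise bound for the integrand
  have hubd : ‖u‖ ≤ Cg * ‖v‖ := le_trans ((g a).le_opNorm v)
    (mul_le_mul_of_nonneg_right (hgb a) (norm_nonneg v))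
  have hbd : ∀ η ∈ Icc (0:ℝ) 1,
      ‖fderiv ℝ g (a + η • Δ) Δ - fderiv ℝ g a u‖ ≤
        Cg ^ 2 * ‖Δ‖ * ‖v‖ * η + Cg * ‖r‖ := by
    intro η hη
    have hsplit : fderiv ℝ g (a + η • Δ) Δ - fderiv ℝ g a u =
        (fderiv ℝ g (a + η • Δ) u - fderiv ℝ g a u) + fderiv ℝ g (a + η • Δ) r := by
      rw [hΔ]; simp only [map_add]; abel
    rw [hsplit]
    have h1 : ‖fderiv ℝ g (a + η • Δ) u - fderiv ℝ g a u‖ ≤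
        Cg ^ 2 * ‖Δ‖ * ‖v‖ * η := by
      have := fderiv_sub_apply_norm_le hg hD2g (a + η • Δ) a u
      have hdist : ‖a + η • Δ - a‖ = η * ‖Δ‖ := by
        simp [norm_smul, abs_of_nonneg hη.1]
      calc ‖fderiv ℝ g (a + η • Δ) u - fderiv ℝ g a u‖
          ≤ Cg * (η * ‖Δ‖) * ‖u‖ := by rw [← hdist]; exact this
        _ ≤ Cg * (η * ‖Δ‖) * (Cg * ‖v‖) := by
            exact mul_le_mul_of_nonneg_left hubd
              (mul_nonneg hCg (mul_nonneg hη.1 (norm_nonneg _)))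
        _ = Cg ^ 2 * ‖Δ‖ * ‖v‖ * η := by ring
    have h2 : ‖fderiv ℝ g (a + η • Δ) r‖ ≤ Cg * ‖r‖ :=
      le_trans ((fderiv ℝ g (a + η • Δ)).le_opNorm r)
        (mul_le_mul_of_nonneg_right (hDg _) (norm_nonneg r))
    calc ‖_ + _‖ ≤ ‖fderiv ℝ g (a + η • Δ) u - fderiv ℝ g a u‖ +
          ‖fderiv ℝ g (a + η • Δ) r‖ := norm_add_le _ _
      _ ≤ Cg ^ 2 * ‖Δ‖ * ‖v‖ * η + Cg * ‖r‖ := add_le_add h1 h2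
  -- integrate the bound
  have hmain : ‖∫ η in (0:ℝ)..1, (fderiv ℝ g (a + η • Δ) Δ - fderiv ℝ g a u)‖ ≤
      |∫ η in (0:ℝ)..1, (Cg ^ 2 * ‖Δ‖ * ‖v‖ * η + Cg * ‖r‖)| := by
    apply intervalIntegral.norm_integral_le_abs_of_norm_le
    · refine (MeasureTheory.ae_restrict_iff' measurableSet_Ioc).2 ?_
      filter_upwards with η hη
      have hη' : η ∈ Ioc (0:ℝ) 1 := by
        simpa using hη
      exact hbd η ⟨hη'.1.le, hη'.2⟩
    · exact (Continuous.intervalIntegrable (by fun_prop) _ _)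
  have hcalc : ∫ η in (0:ℝ)..1, (Cg ^ 2 * ‖Δ‖ * ‖v‖ * η + Cg * ‖r‖) =
      Cg * ‖r‖ + (1 / 2) * Cg ^ 2 * ‖Δ‖ * ‖v‖ := by
    rw [intervalIntegral.integral_add ((Continuous.intervalIntegrable (by fun_prop) _ _))
      intervalIntegrable_const]
    rw [intervalIntegral.integral_const_mul, integral_id]
    simp; ring
  have hnn : (0:ℝ) ≤ Cg * ‖r‖ + (1 / 2) * Cg ^ 2 * ‖Δ‖ * ‖v‖ := by positivity
  rw [hcalc, abs_of_nonneg hnn] at hmain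
  exact hmain
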